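/- For all integers n ≥ 1 and k ≥ 1, the number of subsets E of {0, 1, ..., kn-1} of cardinality n satisfying the ballot condition (for every j with 1 ≤ j ≤ kn, k·|{i ∈ E : i < j}| ≥ j) is equal to the number of prefix-closed sets of n words over a k-letter alphabet (finite subsets P of List (Fin k) with |P| = n closed under taking prefixes). -/

import Mathlib

namespace BallotAux
inductive KTree (k : ℕ) : Type where
  | leaf : KTree k
  | node : (Fin k → KTree k) → KTree k
namespace KTree
variable {k : ℕ}
def code : KTree k → List Bool
  | leaf => [false]
  | node f => true :: (List.ofFn fun i => code (f i)).flatten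
def decodeRev : List Bool → List (KTree k) → Option (List (KTree k))
  | [], s => some s
  | false :: r, s => decodeRev r (leaf :: s)
  | true :: r, s =>
    if h : k ≤ s.length then
      decodeRev r (node (fun i => s.get ⟨i, lt_of_lt_of_le i.2 h⟩) :: s.drop k)
    else none
lemma decodeRev_append (a b : List Bool) (s : List (KTree k)) :
    decodeRev (a ++ b) s = (decodeRev a s).bind (decodeRev b) := by
  induction a generalizing s with
  | nil => simp [decodeRev]
  | cons x r ih =>
    cases x with
    | false => simp [decodeRev, ih]
    | true =>
      by_cases h : k ≤ s.length
      · simp [decodeRev, h, ih]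
      · simp [decodeRev, h]

lemma decodeRev_code_forest (ts : List (KTree k))
    (H : ∀ t ∈ ts, ∀ r s, decodeRev ((code t).reverse ++ r) s = decodeRev r (t :: s)) :
    ∀ r s, decodeRev ((ts.map code).flatten.reverse ++ r) s = decodeRev r (ts ++ s) := by
  induction ts with
  | nil => intro r s; simp
  | cons t ts ih =>
    intro r s
    have h1 : ((t :: ts).map code).flatten.reverse = (ts.map code).flatten.reverse ++ (code t).reverse := by
      simp [List.reverse_append]
    rw [h1, List.append_assoc, ih (fun u hu => H u (List.mem_cons_of_mem _ hu)),
      H t List.mem_cons_self]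
    simp

lemma decodeRev_code (t : KTree k) (r : List Bool) (s : List (KTree k)) :
    decodeRev ((code t).reverse ++ r) s = decodeRev r (t :: s) := by
  induction t generalizing r s with
  | leaf => simp [code, decodeRev]
  | node f ih =>
    have hmap : (List.ofFn fun i => code (f i)) = (List.ofFn f).map code := by
      simp [List.map_ofFn]; rfl
    have h1 : (code (node f)).reverse = ((List.ofFn f).map code).flatten.reverse ++ [true] := by
      simp [code, hmap]
    rw [h1, List.append_assoc,
      decodeRev_code_forest (List.ofFn f) (by
        intro u hu r s
        rw [List.mem_ofFn] at hu
        obtain ⟨i, rfl⟩ := hu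
        exact ih i r s)]
    have hlen : k ≤ ((List.ofFn f) ++ s).length := by simp
    show decodeRev (true :: r) _ = _
    rw [decodeRev]
    simp only [hlen, dif_pos]
    congr 2
    · congr 1
      funext i
      have : (↑i : ℕ) < (List.ofFn f).length := by simp [i.2]
      simp [List.get_eq_getElem, List.getElem_append_left this]
    · have h2 : List.drop (List.ofFn f).length (List.ofFn f ++ s) = s := List.drop_left
      simpa using h2

/-- Completeness: a successful run from the empty stack means the input is a
concatenation of reversed codes. -/
lemma decodeRev_eq_codes (l : List Bool) (s : List (KTree k))
    (h : decodeRev l [] = some s) : l.reverse = (s.map code).flatten := by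
  induction l using List.reverseRecOn generalizing s with
  | nil =>
    simp only [decodeRev, Option.some.injEq] at h
    subst h; simp
  | append_singleton l' b ih =>
    rw [decodeRev_append] at h
    cases h0 : decodeRev l' ([] : List (KTree k)) with
    | none => rw [h0] at h; simp at h
    | some s0 =>
      rw [h0] at h
      simp only [Option.bind_some] at h
      cases b with
      | false =>
        simp only [decodeRev] at h
        obtain rfl : leaf :: s0 = s := by simpa using h
        simp [ih s0 h0, code]
      | true =>
        by_cases hk : k ≤ s0.length
        · simp only [decodeRev, hk, dif_pos, Option.some.injEq] at h
          rw [List.reverse_append, ih s0 h0, ← h]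
          simp only [List.map_cons, List.flatten_cons, code]
          have htake : (List.ofFn fun i : Fin k => code (s0.get ⟨i, lt_of_lt_of_le i.2 hk⟩))
              = (s0.take k).map code := by
            apply List.ext_getElem
            · simp [hk]
            · intro i h1 h2
              simp [List.getElem_take]
          rw [htake]
          conv_lhs => rw [← List.take_append_drop k s0]
          simp only [List.map_append, List.flatten_append, List.map_take, List.map_drop,
            List.reverse_cons, List.reverse_nil, List.nil_append, List.cons_append]
        · simp [decodeRev, hk] at h

/-- Length invariant of the stack machine. -/
lemma decodeRev_length (hk1 : 1 ≤ k) (l : List Bool) (s s' : List (KTree k))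
    (h : decodeRev l s = some s') :
    s'.length + (k - 1) * l.count true = s.length + l.count false := by
  induction l generalizing s with
  | nil => simp [decodeRev] at h; simp [h]
  | cons b r ih =>
    cases b with
    | false =>
      simp only [decodeRev] at h
      have := ih _ h
      simp only [List.length_cons] at this
      simp [List.count_cons]
      omega
    | true =>
      by_cases hk : k ≤ s.length
      · simp only [decodeRev, hk, dif_pos] at h
        have := ih _ h
        simp only [List.length_cons, List.length_drop] at this
        simp only [List.count_cons, if_pos rfl]
        have e1 : (k - 1) * (List.count true r + 1) = (k - 1) * List.count true r + (k - 1) := by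
          ring
        simp at this ⊢
        omega
      · simp [decodeRev, hk] at h

/-- Success: the ballot-type condition guarantees the machine never fails. -/
lemma decodeRev_success (hk1 : 1 ≤ k) (l : List Bool) (s : List (KTree k))
    (H : ∀ p : List Bool, p ++ [true] <+: l →
      (k - 1) * p.count true + k ≤ p.count false + s.length) :
    ∃ s', decodeRev l s = some s' := by
  induction l generalizing s with
  | nil => exact ⟨s, rfl⟩
  | cons b r ih =>
    cases b with
    | false =>
      refine ih (leaf :: s) ?_
      intro p hp
      have := H (false :: p) (by
        obtain ⟨u, hu⟩ := hp
        exact ⟨u, by simp [← hu]⟩)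
      simp [List.count_cons] at this ⊢
      omega
    | true =>
      have hk : k ≤ s.length := by
        have := H [] ⟨r, rfl⟩
        simpa using this
      simp only [decodeRev, hk, dif_pos]
      refine ih _ ?_
      intro p hp
      have := H (true :: p) (by
        obtain ⟨u, hu⟩ := hp
        exact ⟨u, by simp [← hu]⟩)
      simp only [List.count_cons, List.length_cons, List.length_drop] at this ⊢
      simp at this ⊢
      have e1 : (k - 1) * (List.count true p + 1) = (k - 1) * List.count true p + (k - 1) := by
        ring
      omega

/-- Intermediate stack bound: every nonempty prefix keeps the stack nonempty. -/
lemma decodeRev_prefix_bound (hk1 : 1 ≤ k) (l : List Bool) (s s' : List (KTree k))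
    (h : decodeRev l s = some s') :
    ∀ q : List Bool, q <+: l → q ≠ [] →
      (k - 1) * q.count true + 1 ≤ q.count false + s.length := by
  induction l generalizing s with
  | nil => intro q hq hne; rw [List.prefix_nil] at hq; exact absurd hq hne
  | cons b r ih =>
    intro q hq hne
    cases b with
    | false =>
      simp only [decodeRev] at h
      match q, hq with
      | [], _ => exact absurd rfl hne
      | x :: q', hq =>
        rw [List.cons_prefix_cons] at hq
        obtain ⟨rfl, hq'⟩ := hq
        rcases eq_or_ne q' [] with rfl | hq'ne
        · simp [List.count_cons]
        · have := ih _ h q' hq' hq'ne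
          simp [List.count_cons] at this ⊢
          omega
    | true =>
      by_cases hk : k ≤ s.length
      · simp only [decodeRev, hk, dif_pos] at h
        match q, hq with
        | [], _ => exact absurd rfl hne
        | x :: q', hq =>
          rw [List.cons_prefix_cons] at hq
          obtain ⟨rfl, hq'⟩ := hq
          rcases eq_or_ne q' [] with rfl | hq'ne
          · simp only [List.count_cons, List.count_nil]
            simp
            omega
          · have := ih _ h q' hq' hq'ne
            simp only [List.length_cons, List.length_drop] at this
            simp [List.count_cons] at this ⊢
            have e1 : (k - 1) * (List.count true q' + 1) = (k - 1) * List.count true q' + (k - 1) := by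
              ring
            omega
      · simp [decodeRev, hk] at h

def addr : KTree k → Finset (List (Fin k))
  | leaf => ∅
  | node f => insert [] (Finset.univ.biUnion fun i => (addr (f i)).image (List.cons i))

@[simp] lemma addr_leaf : (leaf : KTree k).addr = ∅ := rfl

@[simp] lemma nil_mem_addr_node (f : Fin k → KTree k) : [] ∈ (node f).addr :=
  Finset.mem_insert_self _ _

@[simp] lemma cons_mem_addr_node (f : Fin k → KTree k) (i : Fin k) (w : List (Fin k)) :
    (i :: w) ∈ (node f).addr ↔ w ∈ (f i).addr := by
  simp only [addr, Finset.mem_insert, Finset.mem_biUnion, Finset.mem_univ, true_and,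
    Finset.mem_image]
  constructor
  · rintro (h | ⟨i', v, hv, hvw⟩)
    · exact absurd h (by simp)
    · obtain ⟨rfl, rfl⟩ : i' = i ∧ v = w := by
        constructor <;> [exact (List.cons.injEq _ _ _ _ ▸ hvw).1; exact (List.cons.injEq _ _ _ _ ▸ hvw).2]
      exact hv
  · intro h
    exact Or.inr ⟨i, w, h, rfl⟩

lemma mem_addr_node (f : Fin k → KTree k) (w : List (Fin k)) :
    w ∈ (node f).addr ↔ w = [] ∨ ∃ i v, w = i :: v ∧ v ∈ (f i).addr := by
  cases w with
  | nil => simp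
  | cons i v =>
    simp only [cons_mem_addr_node]
    constructor
    · intro h; exact Or.inr ⟨i, v, rfl, h⟩
    · rintro (h | ⟨i', v', hv, h⟩)
      · exact absurd h (by simp)
      · obtain ⟨rfl, rfl⟩ := List.cons.injEq i v i' v' ▸ (by exact ⟨(List.cons.injEq _ _ _ _ ▸ hv).1, (List.cons.injEq _ _ _ _ ▸ hv).2⟩ : i = i' ∧ v = v')
        exact h

lemma addr_prefix_closed (t : KTree k) :
    ∀ w ∈ t.addr, ∀ p : List (Fin k), p <+: w → p ∈ t.addr := by
  induction t with
  | leaf => simp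
  | node f ih =>
    intro w hw p hp
    rcases (mem_addr_node f w).mp hw with rfl | ⟨i, v, rfl, hv⟩
    · rw [List.prefix_nil] at hp; subst hp; simp
    · cases p with
      | nil => simp
      | cons i' q =>
        rw [List.cons_prefix_cons] at hp
        obtain ⟨rfl, hq⟩ := hp
        exact (cons_mem_addr_node f i' q).mpr (ih i' v hv q hq)

lemma addr_injective : Function.Injective (addr : KTree k → Finset (List (Fin k))) := by
  intro t1 t2 h
  induction t1 generalizing t2 with
  | leaf =>
    cases t2 with
    | leaf => rfl
    | node g =>
      have := nil_mem_addr_node g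
      rw [← h] at this
      simp at this
  | node f ih =>
    cases t2 with
    | leaf =>
      have := nil_mem_addr_node f
      rw [h] at this
      simp at this
    | node g =>
      congr 1
      funext i
      refine ih i ?_
      ext w
      rw [← cons_mem_addr_node f i w, h, cons_mem_addr_node]

lemma card_addr (t : KTree k) : t.addr.card = (code t).count true := by
  induction t with
  | leaf => simp [code]
  | node f ih =>
    have hnil : ([] : List (Fin k)) ∉ Finset.univ.biUnion
        fun i => ((f i).addr).image (List.cons i) := by simp
    have hdisj : ∀ i1 ∈ (Finset.univ : Finset (Fin k)), ∀ i2 ∈ Finset.univ, i1 ≠ i2 →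
        Disjoint (((f i1).addr).image (List.cons i1)) (((f i2).addr).image (List.cons i2)) := by
      intro i1 _ i2 _ hne
      rw [Finset.disjoint_left]
      rintro w hw1 hw2
      simp only [Finset.mem_image] at hw1 hw2
      obtain ⟨v1, _, rfl⟩ := hw1
      obtain ⟨v2, _, h2⟩ := hw2
      exact hne ((List.cons.injEq _ _ _ _ ▸ h2).1.symm ▸ rfl)
    rw [show (node f).addr = insert [] (Finset.univ.biUnion fun i => ((f i).addr).image (List.cons i)) from rfl,
      Finset.card_insert_of_notMem hnil, Finset.card_biUnion hdisj]
    have : ∀ i, (((f i).addr).image (List.cons i)).card = (code (f i)).count true := by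
      intro i
      rw [Finset.card_image_of_injective _ (fun a b hab => (List.cons.injEq _ _ _ _ ▸ hab).2), ih]
    simp only [this]
    rw [show code (node f) = true :: (List.ofFn fun i => code (f i)).flatten from rfl]
    rw [List.count_cons]
    simp [List.count_flatten, List.map_ofFn, List.sum_ofFn, Function.comp]

lemma exists_tree_aux (m : ℕ) : ∀ P : Finset (List (Fin k)), P.card ≤ m →
    (∀ w ∈ P, ∀ p : List (Fin k), p <+: w → p ∈ P) → ∃ t : KTree k, t.addr = P := by
  induction m with
  | zero =>
    intro P hc _
    refine ⟨leaf, ?_⟩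
    simp [Finset.card_eq_zero.mp (Nat.le_zero.mp hc)]
  | succ m ih =>
    intro P hc hP
    rcases P.eq_empty_or_nonempty with rfl | hne
    · exact ⟨leaf, by simp⟩
    have hnil : [] ∈ P := by
      obtain ⟨w, hw⟩ := hne
      exact hP w hw [] (List.nil_prefix)
    -- child sets
    set Pi : Fin k → Finset (List (Fin k)) :=
      fun i => (P.filter fun w => w.head? = some i).image List.tail with hPi
    have hmem : ∀ i (v : List (Fin k)), v ∈ Pi i ↔ (i :: v) ∈ P := by
      intro i v
      simp only [hPi, Finset.mem_image, Finset.mem_filter]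
      constructor
      · rintro ⟨w, ⟨hw, hh⟩, rfl⟩
        cases w with
        | nil => simp at hh
        | cons a u =>
          simp only [List.head?_cons, Option.some.injEq] at hh
          subst hh
          simpa using hw
      · intro h
        exact ⟨i :: v, ⟨h, rfl⟩, rfl⟩
    have hcard : ∀ i, (Pi i).card ≤ m := by
      intro i
      have h1 : (Pi i).card ≤ (P.filter fun w => w.head? = some i).card :=
        Finset.card_image_le
      have h2 : (P.filter fun w => w.head? = some i) ⊆ P.erase [] := by
        intro w hw
        simp only [Finset.mem_filter] at hw
        refine Finset.mem_erase.mpr ⟨?_, hw.1⟩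
        rintro rfl
        simp at hw
      have h3 : (P.erase []).card = P.card - 1 := Finset.card_erase_of_mem hnil
      have h4 : 1 ≤ P.card := Finset.card_pos.mpr hne
      have := Finset.card_le_card h2
      omega
    have hclosed : ∀ i, ∀ w ∈ Pi i, ∀ p : List (Fin k), p <+: w → p ∈ Pi i := by
      intro i w hw p hp
      rw [hmem] at hw ⊢
      exact hP _ hw _ (List.cons_prefix_cons.mpr ⟨rfl, hp⟩)
    choose t ht using fun i => ih (Pi i) (hcard i) (hclosed i)
    refine ⟨node t, ?_⟩
    ext w
    rw [mem_addr_node]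
    constructor
    · rintro (rfl | ⟨i, v, rfl, hv⟩)
      · exact hnil
      · rw [ht i] at hv
        exact (hmem i v).mp hv
    · intro hw
      cases w with
      | nil => exact Or.inl rfl
      | cons i v =>
        exact Or.inr ⟨i, v, rfl, (ht i).symm ▸ (hmem i v).mpr hw⟩

end KTree

open KTree

lemma count_true_add_count_false (l : List Bool) : l.count true + l.count false = l.length := by
  induction l with
  | nil => simp
  | cons b r ih => cases b <;> simp [List.count_cons] <;> omega

def wordOf {m : ℕ} (E : Finset (Fin m)) : List Bool :=
  (List.ofFn fun j => decide (j ∈ E)) ++ [false]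

lemma length_wordOf {m : ℕ} (E : Finset (Fin m)) : (wordOf E).length = m + 1 := by
  simp [wordOf]

lemma getElem_wordOf {m : ℕ} (E : Finset (Fin m)) (j : ℕ) (hj : j < m) :
    (wordOf E)[j]'(by rw [length_wordOf]; omega) = decide ((⟨j, hj⟩ : Fin m) ∈ E) := by
  simp only [wordOf]
  rw [List.getElem_append_left (by simpa using hj), List.getElem_ofFn]

lemma count_true_take_wordOf {m : ℕ} (E : Finset (Fin m)) :
    ∀ j ≤ m, ((wordOf E).take j).count true = (E.filter fun i => i.val < j).card := by
  intro j
  induction j with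
  | zero =>
    intro _
    have : (E.filter fun i => i.val < 0) = ∅ := by
      apply Finset.filter_false_of_mem; intro i _; omega
    simp [this]
  | succ j ih =>
    intro hj
    have hjm : j < m := by omega
    rw [List.take_succ, List.count_append, ih (by omega)]
    have hget : (wordOf E)[j]? = some (decide ((⟨j, hjm⟩ : Fin m) ∈ E)) := by
      rw [List.getElem?_eq_getElem (by rw [length_wordOf]; omega), getElem_wordOf E j hjm]
    rw [hget]
    have hfilter : (E.filter fun i => i.val < j + 1) =
        if (⟨j, hjm⟩ : Fin m) ∈ E then insert ⟨j, hjm⟩ (E.filter fun i => i.val < j)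
        else E.filter fun i => i.val < j := by
      split <;> rename_i hmem <;> ext x <;> simp only [Finset.mem_filter, Finset.mem_insert] <;>
        constructor
      · rintro ⟨hx, hlt⟩
        rcases eq_or_ne x ⟨j, hjm⟩ with rfl | hne
        · exact Or.inl rfl
        · refine Or.inr ⟨hx, ?_⟩
          have : x.val ≠ j := fun hv => hne (Fin.ext hv)
          omega
      · rintro (rfl | ⟨hx, hlt⟩)
        · exact ⟨hmem, by simp⟩
        · exact ⟨hx, by omega⟩
      · rintro ⟨hx, hlt⟩
        refine ⟨hx, ?_⟩
        have : x.val ≠ j := fun hv => hmem (by rwa [show x = ⟨j, hjm⟩ from Fin.ext hv] at hx)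
        omega
      · rintro ⟨hx, hlt⟩
        exact ⟨hx, by omega⟩
    rw [hfilter]
    split <;> rename_i hmem
    · rw [Finset.card_insert_of_notMem (by simp)]
      simp [hmem]
    · simp [hmem]

lemma count_true_wordOf {m : ℕ} (E : Finset (Fin m)) :
    (wordOf E).count true = E.card := by
  have h1 : (wordOf E).take m = List.ofFn fun j => decide (j ∈ E) := by
    simp only [wordOf]
    exact List.take_left' (by simp)
  have h2 := count_true_take_wordOf E m le_rfl
  rw [h1] at h2
  have h3 : (E.filter fun i => i.val < m) = E := by
    apply Finset.filter_true_of_mem; intro i _; exact i.2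
  rw [h3] at h2
  rw [wordOf, List.count_append, h2]
  simp

lemma wordOf_injective {m : ℕ} : Function.Injective (wordOf (m := m)) := by
  intro E1 E2 h
  ext j
  have h1 := getElem_wordOf E1 j.val j.2
  have h2 := getElem_wordOf E2 j.val j.2
  have h0 : (wordOf E1)[j.val]? = (wordOf E2)[j.val]? := by rw [h]
  rw [List.getElem?_eq_getElem (by rw [length_wordOf]; omega),
    List.getElem?_eq_getElem (by rw [length_wordOf]; omega),
    getElem_wordOf E1 j.val j.2, getElem_wordOf E2 j.val j.2] at h0
  simpa using h0

lemma drop_wordOf_last {m : ℕ} (E : Finset (Fin m)) : (wordOf E).drop m = [false] := by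
  simp only [wordOf]
  exact List.drop_left' (by simp)

lemma main_decode {k n : ℕ} (hk : 1 ≤ k) (E : Finset (Fin (k * n)))
    (hcard : E.card = n)
    (hbal : ∀ j : ℕ, 1 ≤ j → j ≤ k * n → j ≤ k * (E.filter fun i => i.val < j).card) :
    ∃ t : KTree k, decodeRev (wordOf E).reverse [] = some [t] ∧ code t = wordOf E := by
  have hsucc : ∃ s', decodeRev (wordOf E).reverse ([] : List (KTree k)) = some s' := by
    apply decodeRev_success hk
    intro p hp
    obtain ⟨u, hu⟩ := hp
    have hw : wordOf E = u.reverse ++ (true :: p.reverse) := by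
      have := congrArg List.reverse hu
      simp only [List.reverse_append, List.reverse_reverse, List.reverse_cons] at this
      simp only [← this]
      simp
    set j := u.reverse.length with hj
    have hdrop : (wordOf E).drop j = true :: p.reverse := by
      rw [hw]; exact List.drop_left
    have hlen : j + (p.length + 1) = k * n + 1 := by
      have h0 := congrArg List.length hw
      rw [length_wordOf] at h0
      simp only [List.length_append, List.length_cons, List.length_reverse] at h0
      simp only [hj, List.length_reverse]
      omega
    have hjm : j < k * n := by
      rcases Nat.lt_or_ge j (k * n) with h | h
      · exact h
      · exfalso
        have hjeq : j = k * n := by omega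
        rw [hjeq, drop_wordOf_last] at hdrop
        simp at hdrop
    -- membership of j in E
    have h1 : ((wordOf E).drop j)[0]'(by rw [hdrop]; simp) = true := by
      simp [hdrop]
    rw [List.getElem_drop] at h1
    have hjE : (⟨j, hjm⟩ : Fin (k * n)) ∈ E := by
      have h2 := getElem_wordOf E j hjm
      simp only [Nat.add_zero] at h1
      rw [h2] at h1
      simpa using h1
    -- counts
    set T := (E.filter fun i => i.val < j).card with hT
    have hTj : ((wordOf E).take j).count true = T :=
      count_true_take_wordOf E j (by omega)
    have hsum : ((wordOf E).take j).count true + ((wordOf E).drop j).count true = n := by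
      rw [← List.count_append, List.take_append_drop, count_true_wordOf, hcard]
    rw [hTj, hdrop] at hsum
    simp [List.count_cons] at hsum
    have hpl := count_true_add_count_false p
    have hjT : j ≤ k * T := by
      rcases Nat.eq_zero_or_pos j with h0 | hj1
      · omega
      · exact hbal j hj1 (by omega)
    have e1 : (k - 1) * p.count true + p.count true = k * p.count true := by
      rw [Nat.sub_one_mul]
      have : p.count true ≤ k * p.count true := Nat.le_mul_of_pos_left _ (by omega)
      omega
    have e3 : k * T + k * p.count true + k = k * n := by
      have : k * (T + (p.count true + 1)) = k * n := by
        rw [show T + (p.count true + 1) = n by omega]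
      rw [← this]; ring
    simp only [List.length_nil]
    omega
  obtain ⟨s', hs'⟩ := hsucc
  have hlen := decodeRev_length hk _ _ _ hs'
  have hct : ((wordOf E).reverse).count true = n := by
    rw [List.count_reverse, count_true_wordOf, hcard]
  have hcf : ((wordOf E).reverse).count false = k * n + 1 - n := by
    have h1 := count_true_add_count_false ((wordOf E).reverse)
    rw [List.length_reverse, length_wordOf] at h1
    omega
  have e1 : (k - 1) * n + n = k * n := by
    rw [Nat.sub_one_mul]
    have : n ≤ k * n := Nat.le_mul_of_pos_left _ (by omega)
    omega
  have hs'len : s'.length = 1 := by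
    rw [hct, hcf] at hlen
    simp at hlen
    have hn_le : n ≤ k * n := by omega
    omega
  obtain ⟨t, rfl⟩ := List.length_eq_one_iff.mp hs'len
  refine ⟨t, hs', ?_⟩
  have := decodeRev_eq_codes _ _ hs'
  simp only [List.reverse_reverse, List.map_cons, List.map_nil, List.flatten_cons,
    List.flatten_nil, List.append_nil] at this
  exact this.symm

lemma ballot_of_success {k n : ℕ} (hk : 1 ≤ k) (E : Finset (Fin (k * n)))
    (hcard : E.card = n) (s' : List (KTree k))
    (h : decodeRev (wordOf E).reverse [] = some s') :
    ∀ j : ℕ, 1 ≤ j → j ≤ k * n → j ≤ k * (E.filter fun i => i.val < j).card := by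
  intro j hj1 hjm
  have hpre : ((wordOf E).drop j).reverse <+: (wordOf E).reverse :=
    ⟨((wordOf E).take j).reverse, by rw [← List.reverse_append, List.take_append_drop]⟩
  have hne : ((wordOf E).drop j).reverse ≠ [] := by
    intro hq
    have := congrArg List.length hq
    simp [length_wordOf] at this
    omega
  have hb := decodeRev_prefix_bound hk _ _ _ h _ hpre hne
  simp only [List.count_reverse, List.length_nil, Nat.add_zero] at hb
  set T := (E.filter fun i => i.val < j).card with hT
  have hTj : ((wordOf E).take j).count true = T :=
    count_true_take_wordOf E j (by omega)
  have hsum : ((wordOf E).take j).count true + ((wordOf E).drop j).count true = n := by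
    rw [← List.count_append, List.take_append_drop, count_true_wordOf, hcard]
  rw [hTj] at hsum
  have hdl : ((wordOf E).drop j).length = k * n + 1 - j := by
    simp [length_wordOf]
  have hpl := count_true_add_count_false ((wordOf E).drop j)
  set t := ((wordOf E).drop j).count true with ht
  have e1 : (k - 1) * t + t = k * t := by
    rw [Nat.sub_one_mul]
    have : t ≤ k * t := Nat.le_mul_of_pos_left _ (by omega)
    omega
  have e3 : k * T + k * t = k * n := by
    rw [← Nat.left_distrib, hsum]
  omega

lemma exists_E {k n : ℕ} (hk : 1 ≤ k) (t : KTree k)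
    (hsize : (code t).count true = n) :
    ∃ E : Finset (Fin (k * n)), wordOf E = code t := by
  classical
  have hdec : decodeRev ((code t).reverse) ([] : List (KTree k)) = some [t] := by
    have := decodeRev_code t [] ([] : List (KTree k))
    simpa [decodeRev] using this
  have hlen := decodeRev_length hk _ _ _ hdec
  rw [List.count_reverse, List.count_reverse, hsize] at hlen
  simp only [List.length_cons, List.length_nil, Nat.zero_add] at hlen
  have e1 : (k - 1) * n + n = k * n := by
    rw [Nat.sub_one_mul]
    have : n ≤ k * n := Nat.le_mul_of_pos_left _ (by omega)
    omega
  have hcf : (code t).count false = k * n + 1 - n := by omega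
  have hlength : (code t).length = k * n + 1 := by
    have := count_true_add_count_false (code t)
    have hn_le : n ≤ k * n := by
      have : n ≤ k * n := Nat.le_mul_of_pos_left _ (by omega)
      omega
    omega
  -- last char is false
  obtain ⟨b, rest, hrev⟩ : ∃ b rest, (code t).reverse = b :: rest := by
    cases hr : (code t).reverse with
    | nil =>
      exfalso
      have := congrArg List.length hr
      simp [hlength] at this
    | cons b rest => exact ⟨b, rest, rfl⟩
  have hb : b = false := by
    cases b
    · rfl
    · exfalso
      rw [hrev] at hdec
      simp only [decodeRev] at hdec
      rw [dif_neg (by simp; omega)] at hdec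
      cases hdec
  have hcode : code t = rest.reverse ++ [false] := by
    have := congrArg List.reverse hrev
    rw [List.reverse_reverse] at this
    rw [this, hb]
    simp
  have hrl : rest.reverse.length = k * n := by
    have h0 := congrArg List.length hcode
    rw [hlength] at h0
    simp only [List.length_append, List.length_reverse, List.length_cons,
      List.length_nil] at h0
    simp only [List.length_reverse]
    omega
  refine ⟨Finset.univ.filter fun j : Fin (k * n) =>
    rest.reverse.getD j.val false = true, ?_⟩
  rw [hcode, wordOf]
  congr 1
  apply List.ext_getElem
  · simp [hrl]
  · intro i h1 h2
    simp only [List.getElem_ofFn]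
    have hi : i < k * n := by simpa using h1
    simp only [Finset.mem_filter, Finset.mem_univ, true_and]
    rw [List.getD_eq_getElem _ _ (by omega : i < rest.reverse.length)]
    cases hx : rest.reverse[i] <;> simp

end BallotAux

open BallotAux BallotAux.KTree

/-- For all integers `n ≥ 1` and `k ≥ 1`, the number of subsets `E` of
`{0, 1, ..., kn-1}` of cardinality `n` satisfying the ballot condition (for every
`j` with `1 ≤ j ≤ kn`, `k·|{i ∈ E : i < j}| ≥ j`) equals the number of
prefix-closed sets of `n` words over a `k`-letter alphabet. -/
theorem ballot_subsets_card_eq_prefix_closed_sets_card (n k : ℕ) (hn : 1 ≤ n) (hk : 1 ≤ k) :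
    ({E : Finset (Fin (k * n)) |
        E.card = n ∧
        ∀ j : ℕ, 1 ≤ j → j ≤ k * n →
          j ≤ k * (E.filter (fun i => i.val < j)).card} : Set _).ncard =
      ({P : Finset (List (Fin k)) |
        P.card = n ∧
        ∀ w ∈ P, ∀ p : List (Fin k), p <+: w → p ∈ P} : Set _).ncard := by
  classical
  set S1 : Set (Finset (Fin (k * n))) :=
    {E | E.card = n ∧ ∀ j : ℕ, 1 ≤ j → j ≤ k * n →
      j ≤ k * (E.filter (fun i => i.val < j)).card} with hS1
  set S2 : Set (Finset (List (Fin k))) :=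
    {P | P.card = n ∧ ∀ w ∈ P, ∀ p : List (Fin k), p <+: w → p ∈ P} with hS2
  set F : Finset (Fin (k * n)) → Finset (List (Fin k)) := fun E =>
    (((decodeRev (wordOf E).reverse []).getD []).headD KTree.leaf).addr with hF
  have hFE : ∀ E ∈ S1, ∃ t : KTree k,
      decodeRev (wordOf E).reverse [] = some [t] ∧ code t = wordOf E ∧ F E = t.addr := by
    intro E hE
    obtain ⟨hc, hb⟩ := hE
    obtain ⟨t, hdec, hcode⟩ := main_decode hk E hc hb
    refine ⟨t, hdec, hcode, ?_⟩
    simp only [hF, hdec, Option.getD_some, List.headD_cons]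
  have hinj : Set.InjOn F S1 := by
    intro E1 h1 E2 h2 hF12
    obtain ⟨t1, hdec1, hcode1, hFe1⟩ := hFE E1 h1
    obtain ⟨t2, hdec2, hcode2, hFe2⟩ := hFE E2 h2
    rw [hFe1, hFe2] at hF12
    have ht : t1 = t2 := addr_injective hF12
    apply wordOf_injective
    rw [← hcode1, ← hcode2, ht]
  have himg : F '' S1 = S2 := by
    ext P
    constructor
    · rintro ⟨E, hE, rfl⟩
      obtain ⟨t, hdec, hcode, hFe⟩ := hFE E hE
      rw [hFe]
      constructor
      · rw [card_addr, hcode, count_true_wordOf, hE.1]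
      · exact addr_prefix_closed t
    · intro hP
      obtain ⟨hPc, hPcl⟩ := hP
      obtain ⟨t, ht⟩ := exists_tree_aux (k := k) P.card P le_rfl hPcl
      have hsize : (code t).count true = n := by
        rw [← card_addr, ht, hPc]
      obtain ⟨E, hE⟩ := exists_E hk t hsize
      have hEcard : E.card = n := by
        rw [← count_true_wordOf E, hE, hsize]
      have hdec : decodeRev (wordOf E).reverse ([] : List (KTree k)) = some [t] := by
        rw [hE]
        have := decodeRev_code t [] ([] : List (KTree k))
        simpa [decodeRev] using this
      have hbal := ballot_of_success hk E hEcard [t] hdec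
      refine ⟨E, ⟨hEcard, hbal⟩, ?_⟩
      simp only [hF, hdec, Option.getD_some, List.headD_cons]
      exact ht
  rw [← himg, Set.ncard_image_of_injOn hinj]
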